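/- Let M be a finite monoid satisfying (xy)^ω y (xy)^ω = (xy)^ω for all x, y ∈ M (where ω is the idempotent power of M), and let μ : A* → M be a monoid homomorphism. Then for all words u, v ∈ A* with alph(u) ⊆ alph(v), one has μ(v)^ω · μ(u) · μ(v)^ω = μ(v)^ω. -/

import Mathlib

section DAaux

variable {M : Type*} [Monoid M]

private lemma idem_pow {f : M} (h : f * f = f) {n : ℕ} (hn : 0 < n) : f ^ n = f := by
  obtain ⟨k, rfl⟩ : ∃ k, n = k + 1 := ⟨n - 1, (Nat.succ_pred_eq_of_pos hn).symm⟩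
  clear hn
  induction k with
  | zero => simp
  | succ m ih => rw [pow_succ, ih, h]

private lemma sandwich {e y a b f : M} (hab : a * b = e) (hby : b * y = f)
    (hfb : f * b = b) (hfaf : f * a * f = f) : e * y * e = e := by
  calc e * y * e = a * b * y * (a * b) := by rw [hab]
  _ = a * (b * y) * (a * b) := by rw [mul_assoc a b y]
  _ = a * f * (a * (f * b)) := by conv_lhs => rw [hby, ← hfb]
  _ = a * (f * a * f * b) := by
      rw [mul_assoc a f (a * (f * b)), ← mul_assoc f a (f * b), ← mul_assoc (f * a) f b]
  _ = a * (f * b) := by rw [hfaf]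
  _ = a * b := by rw [hfb]
  _ = e := hab

/-- The three-factor identity derived from the DA identity. -/
private lemma E3 {ω : ℕ} (hpos : 0 < ω) (hω : ∀ s : M, s ^ ω * s ^ ω = s ^ ω)
    (hDA : ∀ x y : M, (x * y) ^ ω * y * (x * y) ^ ω = (x * y) ^ ω)
    (x y z : M) : (x * (y * z)) ^ ω * y * (x * (y * z)) ^ ω = (x * (y * z)) ^ ω := by
  set e : M := (x * (y * z)) ^ ω with he
  have hee : e * e = e := hω (x * (y * z))
  have h1 : e * (y * z) * e = e := hDA x (y * z)
  have hab : (e * y) * (z * e) = e := by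
    rw [mul_assoc e y (z * e), ← mul_assoc y z e, ← mul_assoc e (y * z) e]
    exact h1
  have hea : e * (e * y) = e * y := by rw [← mul_assoc, hee]
  have hbe : (z * e) * e = z * e := by rw [mul_assoc, hee]
  have hf : (z * e) * (e * y) = z * (e * y) := by
    rw [mul_assoc z e (e * y), ← mul_assoc e e y, hee]
  have hff : (z * (e * y)) * (z * (e * y)) = z * (e * y) := by
    calc (z * (e * y)) * (z * (e * y)) = (z * e) * (e * y) * ((z * e) * (e * y)) := by rw [hf]
    _ = (z * e) * ((e * y) * (z * e) * (e * y)) := by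
        rw [mul_assoc (z * e) (e * y) ((z * e) * (e * y)), ← mul_assoc (e * y) (z * e) (e * y)]
    _ = (z * e) * (e * (e * y)) := by rw [hab]
    _ = (z * e) * (e * y) := by rw [hea]
    _ = z * (e * y) := hf
  have hfaf : (z * (e * y)) * (e * y) * (z * (e * y)) = z * (e * y) := by
    have h2 := hDA z (e * y)
    rwa [idem_pow hff hpos] at h2
  have hfb : (z * (e * y)) * (z * e) = z * e := by
    rw [← hf, mul_assoc (z * e) (e * y) (z * e), hab]
    exact hbe
  have hby : (z * e) * y = z * (e * y) := by rw [mul_assoc]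
  exact sandwich hab hby hfb hfaf

/-- Product closure: the set of elements absorbed by an idempotent is a submonoid. -/
private lemma PC {ω : ℕ} (hpos : 0 < ω) (hω : ∀ s : M, s ^ ω * s ^ ω = s ^ ω)
    (hDA : ∀ x y : M, (x * y) ^ ω * y * (x * y) ^ ω = (x * y) ^ ω)
    {e m c : M} (he : e * e = e) (hm : e * m * e = e) (hc : e * c * e = e) :
    e * (m * c) * e = e := by
  have hr : (e * m) * (e * m) = e * m := by rw [← mul_assoc, hm]
  have hel : e * (c * e) = e := by rw [← mul_assoc]; exact hc
  have helr : e * ((c * e) * (e * m)) = e * m := by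
    rw [← mul_assoc e (c * e) (e * m), hel, ← mul_assoc, he]
  have h3 := E3 hpos hω hDA e (c * e) (e * m)
  rw [helr, idem_pow hr hpos] at h3
  -- h3 : (e*m) * (c*e) * (e*m) = e*m
  have hre : (e * m) * e = e := hm
  have hle : (c * e) * e = c * e := by rw [mul_assoc, he]
  have key : (e * m) * (c * e) = e := by
    calc (e * m) * (c * e) = (e * m) * ((c * e) * ((e * m) * e)) := by rw [hre, hle]
    _ = (e * m) * (c * e) * ((e * m) * e) := by rw [← mul_assoc (e * m) (c * e) ((e * m) * e)]
    _ = (e * m) * (c * e) * (e * m) * e := by rw [← mul_assoc ((e * m) * (c * e)) (e * m) e]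
    _ = (e * m) * e := by rw [h3]
    _ = e := hre
  calc e * (m * c) * e = (e * m) * (c * e) := by
        rw [← mul_assoc e m c, mul_assoc (e * m) c e]
  _ = e := key

end DAaux

private lemma letter_absorb {A M : Type*} [Monoid M] {ω : ℕ} (hpos : 0 < ω)
    (hω : ∀ s : M, s ^ ω * s ^ ω = s ^ ω)
    (hDA : ∀ x y : M, (x * y) ^ ω * y * (x * y) ^ ω = (x * y) ^ ω)
    (μ : FreeMonoid A →* M) (v : FreeMonoid A) {a : A} (ha : a ∈ FreeMonoid.toList v) :
    μ v ^ ω * μ (FreeMonoid.of a) * μ v ^ ω = μ v ^ ω := by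
  obtain ⟨p, q, hpq⟩ := List.append_of_mem ha
  have hv : v = FreeMonoid.ofList p * (FreeMonoid.of a * FreeMonoid.ofList q) := by
    conv_lhs => rw [← FreeMonoid.ofList_toList v, hpq]
    rw [FreeMonoid.ofList_append, FreeMonoid.ofList_cons]
  have h3 := E3 hpos hω hDA (μ (FreeMonoid.ofList p)) (μ (FreeMonoid.of a))
    (μ (FreeMonoid.ofList q))
  rw [← map_mul, ← map_mul] at h3
  rw [hv]
  exact h3

theorem DA_absorbs_subalphabet_words {A M : Type*} [Monoid M] [Finite M]
    (ω : ℕ) (hω : ∀ s : M, s ^ ω * s ^ ω = s ^ ω)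
    (hDA : ∀ x y : M, (x * y) ^ ω * y * (x * y) ^ ω = (x * y) ^ ω)
    (μ : FreeMonoid A →* M) (u v : FreeMonoid A)
    (halph : ∀ a : A, a ∈ FreeMonoid.toList u → a ∈ FreeMonoid.toList v) :
    μ v ^ ω * μ u * μ v ^ ω = μ v ^ ω := by
  rcases Nat.eq_zero_or_pos ω with h0 | hpos
  · subst h0
    have htriv := hDA 1 (μ u)
    simp only [pow_zero, one_mul, mul_one] at htriv ⊢
    exact htriv
  · have main : ∀ w : FreeMonoid A,
        (∀ a : A, a ∈ FreeMonoid.toList w → a ∈ FreeMonoid.toList v) →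
        μ v ^ ω * μ w * μ v ^ ω = μ v ^ ω := by
      intro w
      induction w using FreeMonoid.recOn with
      | one => intro _; simpa using hω (μ v)
      | of_mul a w IH =>
        intro hw
        have ha : a ∈ FreeMonoid.toList v := hw a (by
          simp [FreeMonoid.toList_mul, FreeMonoid.toList_of])
        have h1 := letter_absorb hpos hω hDA μ v ha
        have h2 := IH (fun b hb => hw b (by
          simp [FreeMonoid.toList_mul, FreeMonoid.toList_of, hb]))
        have h3 := PC hpos hω hDA (hω (μ v)) h1 h2
        rw [map_mul]
        exact h3
    exact main u halph
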